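/- Dual-schedule reversibility by strong induction: let ε : ℝ × ℕ → ℝ be any function, and for n = 0,…,N define primary inversion latents p̄_{n+1} = A_n·p̄_n + B_n·ε(ā_n, τ_n) and auxiliary inversion latents ā_{n+1} = C_n·ā_n + D_n·ε(p̄_{n+1}, σ_n), with sampling latents defined by p̃_n = A_n⁻¹·(p̃_{n+1} − B_n·ε(ã_n, τ_n)) and ã_n = C_n⁻¹·(ã_{n+1} − D_n·ε(p̃_{n+1}, σ_n)), where all A_n, C_n ≠ 0. If p̃_{N} = p̄_{N} and ã_{N} = ā_{N} at the top of the schedules, then p̃_n = p̄_n and ã_n = ā_n for all n ≤ N; in particular p̃_0 = p̄_0 (perfect reconstruction). -/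
import Mathlib


theorem dual_schedule_perfect_reconstruction
    (N : ℕ) (A B C D : ℕ → ℝ) (τ σ : ℕ → ℕ) (ε : ℝ → ℕ → ℝ)
    (pbar abar ptil atil : ℕ → ℝ)
    (hA : ∀ n, A n ≠ 0) (hC : ∀ n, C n ≠ 0)
    (hpbar : ∀ n, pbar (n + 1) = A n * pbar n + B n * ε (abar n) (τ n))
    (habar : ∀ n, abar (n + 1) = C n * abar n + D n * ε (pbar (n + 1)) (σ n))
    (hptil : ∀ n, ptil n = (A n)⁻¹ * (ptil (n + 1) - B n * ε (atil n) (τ n)))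
    (hatil : ∀ n, atil n = (C n)⁻¹ * (atil (n + 1) - D n * ε (ptil (n + 1)) (σ n)))
    (hpN : ptil N = pbar N) (haN : atil N = abar N) :
    (∀ n ≤ N, ptil n = pbar n ∧ atil n = abar n) ∧ (ptil 0 = pbar 0) := by
  have step : ∀ n, ptil (n + 1) = pbar (n + 1) → atil (n + 1) = abar (n + 1) →
      ptil n = pbar n ∧ atil n = abar n := by
    intro n hp ha
    have ha' : atil n = abar n := by
      rw [hatil n, ha, hp, habar n, add_sub_cancel_right, inv_mul_cancel_left₀ (hC n)]
    refine ⟨?_, ha'⟩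
    rw [hptil n, hp, ha', hpbar n, add_sub_cancel_right, inv_mul_cancel_left₀ (hA n)]
  have key : ∀ m, m ≤ N → ptil (N - m) = pbar (N - m) ∧ atil (N - m) = abar (N - m) := by
    intro m
    induction m with
    | zero => intro _; simpa using ⟨hpN, haN⟩
    | succ k ih =>
      intro hk
      have hk' : k ≤ N := Nat.le_of_succ_le hk
      have hEq : N - k = (N - (k + 1)) + 1 := by omega
      obtain ⟨hp, ha⟩ := ih hk'
      rw [hEq] at hp ha
      exact step _ hp ha
  have main : ∀ n ≤ N, ptil n = pbar n ∧ atil n = abar n := by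
    intro n hn
    have := key (N - n) (Nat.sub_le _ _)
    rwa [Nat.sub_sub_self hn] at this
  exact ⟨main, (main 0 (Nat.zero_le _)).1⟩
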